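/- In the system !_{k}MacLL with single-formula contraction C (from Γ[(!A,!A)] ⇒ C derive Γ[!A] ⇒ C) instead of CK, the sequent !a ⊗ !b ⇒ (a⊗b) ⊗ (a⊗b) is NOT derivable without cut (for distinct propositional variables a and b), even though it is derivable with cut. Hence this system does not admit cut elimination. -/
import Mathlib


/-- Multiplicative exponential formulas: variables, unit, !, ⊗, →, ←. -/
inductive Fm : Type where
  | var : Nat → Fm
  | one : Fm
  | bang : Fm → Fm
  | tens : Fm → Fm → Fm
  | arr : Fm → Fm → Fm      -- A → B
  | larr : Fm → Fm → Fm     -- B ← A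
deriving DecidableEq

/-- Structures: binary trees of formulas, allowing the empty structure. -/
inductive Str : Type where
  | emp : Str
  | leaf : Fm → Str
  | comma : Str → Str → Str
deriving DecidableEq

/-- One-hole structure contexts. -/
inductive Ctx : Type where
  | hole : Ctx
  | commaL : Ctx → Str → Ctx
  | commaR : Str → Ctx → Ctx

/-- Plug a structure into the hole of a context. -/
def Ctx.fill : Ctx → Str → Str
  | .hole, Δ => Δ
  | .commaL c Δ, P => .comma (c.fill P) Δ
  | .commaR Γ c, P => .comma Γ (c.fill P)

/-- !Γ : bang every leaf formula of a structure. -/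
def bangStr : Str → Str
  | .emp => .emp
  | .leaf A => .leaf (.bang A)
  | .comma a b => .comma (bangStr a) (bangStr b)

/-- `StarBang Γ Γ'` : Γ' is Γ with some subset of its leaf formulas banged (!*Γ). -/
inductive StarBang : Str → Str → Prop where
  | emp : StarBang .emp .emp
  | leaf (A : Fm) : StarBang (.leaf A) (.leaf A)
  | leafBang (A : Fm) : StarBang (.leaf A) (.leaf (.bang A))
  | comma {a a' b b' : Str} : StarBang a a' → StarBang b b' →
      StarBang (.comma a b) (.comma a' b')

/-- Proper structures: nonempty binary trees of formulas (no occurrence of the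
empty structure), matching the grammar Γ ::= (Γ,Γ) | F. -/
inductive Str.proper : Str → Prop where
  | leaf (A : Fm) : (Str.leaf A).proper
  | comma {a b : Str} : a.proper → b.proper → (Str.comma a b).proper

/-- Flags selecting the optional modal/structural rules of a system. -/
structure Flags where
  bangL : Bool := false
  bangR : Bool := false
  bangRK : Bool := false
  bangR4 : Bool := false
  bangRK4 : Bool := false
  contr : Bool := false     -- single-formula contraction C
  contrK : Bool := false    -- structural contraction CK
  weak : Bool := false      -- weakening W
  cut : Bool := false

/-- Sequent derivability in MacLL extended by the rules selected by `fl`,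
with nonlogical axioms `Ax`. -/
inductive Der (fl : Flags) (Ax : Set (Str × Fm)) : Str → Fm → Prop where
  | ax {Γ : Str} {C : Fm} : (Γ, C) ∈ Ax → Der fl Ax Γ C
  | init (A : Fm) : Der fl Ax (.leaf A) A
  | tensL (Γ : Ctx) {A B C : Fm} :
      Der fl Ax (Γ.fill (.comma (.leaf A) (.leaf B))) C →
      Der fl Ax (Γ.fill (.leaf (.tens A B))) C
  | tensR {Γ Δ : Str} {A B : Fm} :
      Der fl Ax Γ A → Der fl Ax Δ B → Der fl Ax (.comma Γ Δ) (.tens A B)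
  | arrL (Γ : Ctx) {Δ : Str} {A B C : Fm} :
      Der fl Ax Δ A → Der fl Ax (Γ.fill (.leaf B)) C →
      Der fl Ax (Γ.fill (.comma Δ (.leaf (.arr A B)))) C
  | arrR {Γ : Str} {A B : Fm} :
      Der fl Ax (.comma (.leaf A) Γ) B → Der fl Ax Γ (.arr A B)
  | larrL (Γ : Ctx) {Δ : Str} {A B C : Fm} :
      Der fl Ax Δ A → Der fl Ax (Γ.fill (.leaf B)) C →
      Der fl Ax (Γ.fill (.comma (.leaf (.larr B A)) Δ)) C
  | larrR {Γ : Str} {A B : Fm} :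
      Der fl Ax (.comma Γ (.leaf A)) B → Der fl Ax Γ (.larr B A)
  | oneL (Γ : Ctx) {C : Fm} :
      Der fl Ax (Γ.fill .emp) C → Der fl Ax (Γ.fill (.leaf .one)) C
  | oneR : Der fl Ax .emp .one
  | bangL (Γ : Ctx) {A C : Fm} : fl.bangL = true →
      Der fl Ax (Γ.fill (.leaf A)) C → Der fl Ax (Γ.fill (.leaf (.bang A))) C
  | bangR {A C : Fm} : fl.bangR = true →
      Der fl Ax (.leaf A) C → Der fl Ax (.leaf (.bang A)) (.bang C)
  | bangRK {Γ : Str} {C : Fm} : fl.bangRK = true →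
      Der fl Ax Γ C → Der fl Ax (bangStr Γ) (.bang C)
  | bangR4 {A C : Fm} : fl.bangR4 = true →
      Der fl Ax (.leaf (.bang A)) C → Der fl Ax (.leaf (.bang A)) (.bang C)
  | bangRK4 {Γ Γ' : Str} {C : Fm} : fl.bangRK4 = true →
      StarBang Γ Γ' → Der fl Ax Γ' C → Der fl Ax (bangStr Γ) (.bang C)
  | contr (Γ : Ctx) {A : Fm} {C : Fm} : fl.contr = true →
      Der fl Ax (Γ.fill (.comma (.leaf (.bang A)) (.leaf (.bang A)))) C →
      Der fl Ax (Γ.fill (.leaf (.bang A))) C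
  | contrK (Γ : Ctx) {Δ : Str} {C : Fm} : fl.contrK = true → Δ.proper →
      Der fl Ax (Γ.fill (.comma (bangStr Δ) (bangStr Δ))) C →
      Der fl Ax (Γ.fill (bangStr Δ)) C
  | weak (Γ : Ctx) {A C : Fm} : fl.weak = true →
      Der fl Ax (Γ.fill .emp) C → Der fl Ax (Γ.fill (.leaf (.bang A))) C
  | cut (Γ : Ctx) {Δ : Str} {A C : Fm} : fl.cut = true →
      Der fl Ax Δ A → Der fl Ax (Γ.fill (.leaf A)) C →
      Der fl Ax (Γ.fill Δ) C

/-- Plain MacLL (no modal or structural rules, no cut). -/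
def macll : Flags := {}

/-- !_{k}MacLL with the single-formula contraction C, cut-free. -/
def sys6 : Flags := { bangL := true, bangRK := true, contr := true }

/-- The same system with cut. -/
def sys6c : Flags := { bangL := true, bangRK := true, contr := true, cut := true }

/-- Variables occurring in a formula. -/
def fv : Fm → Set Nat
  | .var n => {n}
  | .one => ∅
  | .bang A => fv A
  | .tens A B => fv A ∪ fv B
  | .arr A B => fv A ∪ fv B
  | .larr A B => fv A ∪ fv B

/-- Variables occurring in a structure. -/
def vs : Str → Set Nat
  | .emp => ∅
  | .leaf A => fv A
  | .comma l r => vs l ∪ vs r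

def okF (a b : Nat) (A : Fm) : Prop :=
  A = .var a ∨ A = .bang (.var a) ∨ A = .var b ∨ A = .bang (.var b)

def okS (a b : Nat) : Str → Prop
  | .emp => True
  | .leaf A => okF a b A
  | .comma l r => okS a b l ∧ okS a b r

lemma vs_fill (c : Ctx) {X Y : Str} (h : vs X = vs Y) :
    vs (c.fill X) = vs (c.fill Y) := by
  induction c <;> simp [Ctx.fill, vs, *]

lemma okS_fill_out (a b : Nat) (c : Ctx) {X : Str} (h : okS a b (c.fill X)) :
    okS a b X := by
  induction c with
  | hole => exact h
  | commaL c Δ ih => exact ih h.1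
  | commaR Γ c ih => exact ih h.2

lemma okS_fill_in (a b : Nat) (c : Ctx) {X Y : Str} (h : okS a b (c.fill X))
    (hY : okS a b Y) : okS a b (c.fill Y) := by
  induction c with
  | hole => exact hY
  | commaL c Δ ih => exact ⟨ih h.1, h.2⟩
  | commaR Γ c ih => exact ⟨h.1, ih h.2⟩

/-- Γ is a top-level comma whose left part mentions only `a` and right part
only `b`. -/
def SepS (a b : Nat) (Γ : Str) : Prop :=
  ∃ L R, Γ = .comma L R ∧ vs L ⊆ {a} ∧ vs R ⊆ {b}

lemma sep_fill (a b : Nat) (c : Ctx) {X Y : Str} (hX : ∀ L R, X ≠ .comma L R)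
    (h : vs X = vs Y) : SepS a b (c.fill X) → SepS a b (c.fill Y) := by
  cases c with
  | hole => rintro ⟨L, R, hEq, -, -⟩; exact absurd hEq (hX L R)
  | commaL c Δ =>
    rintro ⟨L, R, hEq, hL, hR⟩
    injection hEq with h1 h2
    subst h1; subst h2
    exact ⟨c.fill Y, Δ, rfl, by rw [← vs_fill c h]; exact hL, hR⟩
  | commaR Γ c =>
    rintro ⟨L, R, hEq, hL, hR⟩
    injection hEq with h1 h2
    subst h1; subst h2
    exact ⟨Γ, c.fill Y, rfl, hL, by rw [← vs_fill c h]; exact hR⟩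

lemma main_lemma (a b : Nat) (hab : a ≠ b) {Γ : Str} {C : Fm}
    (d : Der sys6 ∅ Γ C) : okS a b Γ →
    ((∀ x, C = .var x → x ∈ vs Γ) ∧
     (C = .tens (.var a) (.var b) → b ∈ vs Γ) ∧
     (C = .tens (.tens (.var a) (.var b)) (.tens (.var a) (.var b)) →
        SepS a b Γ → False)) := by
  induction d with
  | ax h => exact absurd h (Set.notMem_empty _)
  | init A =>
    intro hok
    refine ⟨?_, ?_, ?_⟩
    · rintro x rfl; simp [vs, fv]
    · rintro rfl; simp [okS, okF] at hok
    · rintro rfl _; simp [okS, okF] at hok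
  | tensL c d ih =>
    intro hok
    have h := okS_fill_out a b c hok
    simp [okS, okF] at h
  | tensR dA dB ihA ihB =>
    intro hok
    obtain ⟨h1, h2⟩ : okS a b _ ∧ okS a b _ := hok
    refine ⟨?_, ?_, ?_⟩
    · intro x h; simp at h
    · intro h
      injection h with hA hB; subst hA; subst hB
      exact Set.mem_union_right _ ((ihB h2).1 _ rfl)
    · intro h hsep
      injection h with hA hB; subst hA; subst hB
      obtain ⟨L, R, hEq, hL, hR⟩ := hsep
      injection hEq with e1 e2
      subst e1; subst e2
      have hb := (ihA h1).2.1 rfl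
      exact hab (Set.mem_singleton_iff.mp (hL hb)).symm
  | arrL c dA dB ihA ihB =>
    intro hok
    have h := okS_fill_out a b c hok
    simp [okS, okF] at h
  | arrR d ih =>
    intro _
    exact ⟨fun x h => by simp at h, fun h => by simp at h, fun h => by simp at h⟩
  | larrL c dA dB ihA ihB =>
    intro hok
    have h := okS_fill_out a b c hok
    simp [okS, okF] at h
  | larrR d ih =>
    intro _
    exact ⟨fun x h => by simp at h, fun h => by simp at h, fun h => by simp at h⟩
  | oneL c d ih =>
    intro hok
    have h := okS_fill_out a b c hok
    simp [okS, okF] at h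
  | oneR =>
    intro _
    exact ⟨fun x h => by simp at h, fun h => by simp at h, fun h => by simp at h⟩
  | bangL c hfl d ih =>
    rename_i A C0
    intro hok
    have hAK := okS_fill_out a b c hok
    simp only [okS] at hAK
    have hA' : okF a b A := by
      rcases hAK with h|h|h|h
      · exact absurd h (by simp)
      · injection h with h'; exact Or.inl h'
      · exact absurd h (by simp)
      · injection h with h'; exact Or.inr (Or.inr (Or.inl h'))
    have hok' := okS_fill_in (Y := .leaf A) a b c hok hA'
    have hvs : vs (Str.leaf (.bang A)) = vs (Str.leaf A) := rfl
    have hvsf := vs_fill (X := Str.leaf (.bang A)) (Y := Str.leaf A) c hvs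
    obtain ⟨i1, i2, i3⟩ := ih hok'
    refine ⟨fun x h => ?_, fun h => ?_, fun h hsep => ?_⟩
    · rw [hvsf]; exact i1 x h
    · rw [hvsf]; exact i2 h
    · exact i3 h (sep_fill a b c (fun L R hc => Str.noConfusion hc) hvs hsep)
  | bangRK hfl d ih =>
    intro _
    exact ⟨fun x h => by simp at h, fun h => by simp at h, fun h => by simp at h⟩
  | contr c hfl d ih =>
    rename_i A C0
    intro hok
    have hAK := okS_fill_out a b c hok
    simp only [okS] at hAK
    have hok' := okS_fill_in (Y := .comma (.leaf (.bang A)) (.leaf (.bang A)))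
      a b c hok ⟨hAK, hAK⟩
    have hvs : vs (Str.leaf (.bang A)) =
        vs (Str.comma (.leaf (.bang A)) (.leaf (.bang A))) :=
      (Set.union_self _).symm
    have hvsf := vs_fill c hvs
    obtain ⟨i1, i2, i3⟩ := ih hok'
    refine ⟨fun x h => ?_, fun h => ?_, fun h hsep => ?_⟩
    · rw [hvsf]; exact i1 x h
    · rw [hvsf]; exact i2 h
    · exact i3 h (sep_fill a b c (fun L R hc => Str.noConfusion hc) hvs hsep)
  | bangR hfl d ih => simp [sys6] at hfl
  | bangR4 hfl d ih => simp [sys6] at hfl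
  | bangRK4 hfl hsb d ih => simp [sys6] at hfl
  | contrK c hfl hp d ih => simp [sys6] at hfl
  | weak c hfl d ih => simp [sys6] at hfl
  | cut c hfl dA dB ihA ihB => simp [sys6] at hfl

lemma fill_eq_leaf {c : Ctx} {X : Str} {F : Fm} (h : c.fill X = .leaf F) :
    c = .hole ∧ X = .leaf F := by
  cases c with
  | hole => exact ⟨rfl, h⟩
  | commaL _ _ => exact absurd h (by simp [Ctx.fill])
  | commaR _ _ => exact absurd h (by simp [Ctx.fill])

lemma not_der_aux (a b : Nat) (hab : a ≠ b) :
    ¬ Der sys6 ∅ (.leaf (.tens (.bang (.var a)) (.bang (.var b))))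
      (.tens (.tens (.var a) (.var b)) (.tens (.var a) (.var b))) := by
  intro d0
  have inv : ∀ Γ C, Der sys6 ∅ Γ C →
      Γ = .leaf (.tens (.bang (.var a)) (.bang (.var b))) →
      C = .tens (.tens (.var a) (.var b)) (.tens (.var a) (.var b)) → False := by
    intro Γ C d
    cases d with
    | ax h => intro _ _; exact absurd h (Set.notMem_empty _)
    | init A => intro hG hC; subst hC; simp at hG
    | tensL c d =>
      intro hG hC
      obtain ⟨hc, hX⟩ := fill_eq_leaf hG
      subst hc
      injection hX with hX'
      injection hX' with e1 e2
      subst e1; subst e2; subst hC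
      have hok : okS a b (Str.comma (.leaf (.bang (.var a))) (.leaf (.bang (.var b)))) :=
        ⟨Or.inr (Or.inl rfl), Or.inr (Or.inr (Or.inr rfl))⟩
      exact (main_lemma a b hab d hok).2.2 rfl
        ⟨_, _, rfl, fun x hx => hx, fun x hx => hx⟩
    | tensR dA dB => intro hG _; simp at hG
    | arrL c dA dB => intro hG _; obtain ⟨-, h2⟩ := fill_eq_leaf hG; simp at h2
    | arrR d => intro _ hC; simp at hC
    | larrL c dA dB => intro hG _; obtain ⟨-, h2⟩ := fill_eq_leaf hG; simp at h2
    | larrR d => intro _ hC; simp at hC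
    | oneL c d => intro hG _; obtain ⟨-, h2⟩ := fill_eq_leaf hG; simp at h2
    | oneR => intro _ hC; simp at hC
    | bangL c hfl d => intro hG _; obtain ⟨-, h2⟩ := fill_eq_leaf hG; simp at h2
    | bangR hfl d => simp [sys6] at hfl
    | bangRK hfl d => intro _ hC; simp at hC
    | bangR4 hfl d => simp [sys6] at hfl
    | bangRK4 hfl hsb d => simp [sys6] at hfl
    | contr c hfl d => intro hG _; obtain ⟨-, h2⟩ := fill_eq_leaf hG; simp at h2
    | contrK c hfl hp d => simp [sys6] at hfl
    | weak c hfl d => simp [sys6] at hfl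
    | cut c hfl dA dB => simp [sys6] at hfl
  exact inv _ _ d0 rfl rfl

lemma der_with_cut (a b : Nat) :
    Der sys6c ∅ (.leaf (.tens (.bang (.var a)) (.bang (.var b))))
      (.tens (.tens (.var a) (.var b)) (.tens (.var a) (.var b))) := by
  have d1 : Der sys6c ∅ (.comma (.leaf (.var a)) (.leaf (.var b)))
      (.tens (.var a) (.var b)) := Der.tensR (Der.init _) (Der.init _)
  have d2 := Der.bangRK (fl := sys6c) (Ax := ∅)
    (Γ := .comma (.leaf (.var a)) (.leaf (.var b))) rfl d1
  have d3 : Der sys6c ∅ (.leaf (.bang (.tens (.var a) (.var b))))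
      (.tens (.var a) (.var b)) := Der.bangL .hole rfl (Der.init _)
  have d4 := Der.tensR d3 d3
  have d5 : Der sys6c ∅ (.leaf (.bang (.tens (.var a) (.var b))))
      (.tens (.tens (.var a) (.var b)) (.tens (.var a) (.var b))) :=
    Der.contr .hole rfl d4
  have d6 := Der.cut (Γ := .hole) rfl d2 d5
  exact Der.tensL .hole d6

/-- With single-formula contraction C in place of CK, the sequent
!a ⊗ !b ⇒ (a⊗b) ⊗ (a⊗b) is derivable with cut but not without, so the
system does not admit cut elimination. -/
theorem stmt6 (a b : Nat) (hab : a ≠ b) :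
    ¬ Der sys6 ∅
        (.leaf (.tens (.bang (.var a)) (.bang (.var b))))
        (.tens (.tens (.var a) (.var b)) (.tens (.var a) (.var b))) ∧
    Der sys6c ∅
        (.leaf (.tens (.bang (.var a)) (.bang (.var b))))
        (.tens (.tens (.var a) (.var b)) (.tens (.var a) (.var b))) := by
  exact ⟨not_der_aux a b hab, der_with_cut a b⟩
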